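/- Let p be a prime with 3 | (p − 1) and ω ∈ F_p a primitive third root of unity. Let C be the cyclic code of length 3p over F_p with generator polynomial g(x) = (x−1)^4 (x−ω)^2 (x−ω^2). Then C has dimension 3p − 7 and minimum Hamming distance 5. -/

import Mathlib

open Polynomial

/-- Hamming weight of a cyclic word `x : ZMod n → F`. -/
def hammingWt {F : Type*} [Zero F] [DecidableEq F] (n : ℕ) (x : ZMod n → F) : ℕ :=
  ((Finset.range n).filter fun i : ℕ => x (↑i) ≠ 0).card

/-- Symbol-pair weight of a cyclic word `x : ZMod n → F`. -/
def pairWt {F : Type*} [Zero F] [DecidableEq F] (n : ℕ) (x : ZMod n → F) : ℕ :=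
  ((Finset.range n).filter fun i : ℕ =>
    (x (↑i), x (↑i + 1)) ≠ ((0 : F), (0 : F))).card

/-- Symbol-pair distance between two words of length `n`. -/
def pairDist {F : Type*} [DecidableEq F] (n : ℕ) (x y : ZMod n → F) : ℕ :=
  ((Finset.range n).filter fun i : ℕ =>
    (x (↑i), x (↑i + 1)) ≠ (y (↑i), y (↑i + 1))).card

/-- The polynomial associated to a word. -/
noncomputable def toPoly {F : Type*} [Semiring F] (n : ℕ) (x : ZMod n → F) : F[X] :=
  ∑ i ∈ Finset.range n, Polynomial.C (x (↑i)) * X ^ i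

/-- The cyclic code of length `n` with generator polynomial `g`:
a word of length `n` is a codeword iff its associated polynomial
(of degree `< n`) is divisible by `g`. -/
def cyclicCode {F : Type*} [Field F] (n : ℕ) (g : F[X]) : Set (ZMod n → F) :=
  {c | g ∣ toPoly n c}

open Finset
section aux
variable {F : Type*} [Field F]

lemma my_vand (S : Finset ℕ) (e f : ℕ → F)
    (hS : S.Nonempty) (he : ∀ i ∈ S, ∀ j ∈ S, e i = e j → i = j)
    (hf : ∀ i ∈ S, f i ≠ 0)
    (hm : ∀ k < S.card, ∑ i ∈ S, f i * e i ^ k = 0) : False := by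
  obtain ⟨a, ha⟩ := hS
  set q : F[X] := ∏ s ∈ S.erase a, (X - C (e s)) with hq
  have hdeg : q.natDegree < S.card := by
    have h1 : q.natDegree = ∑ s ∈ S.erase a, (X - C (e s)).natDegree :=
      natDegree_prod_of_monic _ _ (fun s _ => monic_X_sub_C _)
    simp only [natDegree_X_sub_C, Finset.sum_const, smul_eq_mul, mul_one] at h1
    rw [h1]
    exact lt_of_lt_of_le (Finset.card_erase_lt_of_mem ha) le_rfl
  have h1 : ∑ i ∈ S, f i * q.eval (e i) = 0 := by
    have step : ∀ i ∈ S, f i * q.eval (e i)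
        = ∑ k ∈ range S.card, q.coeff k * (f i * e i ^ k) := by
      intro i _
      rw [q.eval_eq_sum_range' hdeg, Finset.mul_sum]
      exact Finset.sum_congr rfl fun k _ => by ring
    rw [Finset.sum_congr rfl step, Finset.sum_comm]
    refine Finset.sum_eq_zero fun k hk => ?_
    rw [← Finset.mul_sum, hm k (Finset.mem_range.mp hk), mul_zero]
  have h2 : ∑ i ∈ S, f i * q.eval (e i) = f a * q.eval (e a) := by
    refine Finset.sum_eq_single_of_mem a ha fun i hi hne => ?_
    have : q.eval (e i) = 0 := by
      rw [hq, eval_prod]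
      refine Finset.prod_eq_zero (Finset.mem_erase.mpr ⟨hne, hi⟩) ?_
      simp
    rw [this, mul_zero]
  have h3 : q.eval (e a) ≠ 0 := by
    rw [hq, eval_prod]
    refine Finset.prod_ne_zero_iff.mpr fun s hs => ?_
    have hsa : s ≠ a := (Finset.mem_erase.mp hs).1
    have hsS : s ∈ S := (Finset.mem_erase.mp hs).2
    simp only [eval_sub, eval_X, eval_C, sub_ne_zero]
    exact fun h => hsa (he s hsS a ha h.symm)
  rw [h1] at h2
  exact hf a ha (by
    rcases mul_eq_zero.mp h2.symm with h | h
    · exact h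
    · exact absurd h h3)

lemma my_deriv_cond (P : F[X]) (a : F) (m k : ℕ) (h : (X - C a) ^ m ∣ P) (hk : k < m) :
    (Polynomial.derivative^[k] P).eval a = 0 := by
  have h2 : (X - C a) ^ (m - k) ∣ Polynomial.derivative^[k] P :=
    Polynomial.pow_sub_dvd_iterate_derivative_of_pow_dvd k h
  have h3 : (X - C a) ∣ Polynomial.derivative^[k] P :=
    dvd_trans (dvd_pow_self _ (by omega : m - k ≠ 0)) h2
  obtain ⟨Q, hQ⟩ := h3
  rw [hQ, eval_mul, eval_sub, eval_X, eval_C, sub_self, zero_mul]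

lemma my_moment (n : ℕ) (c : ZMod n → F) (a : F) (m k : ℕ)
    (h : (X - C a) ^ m ∣ toPoly n c) (hk : k < m) :
    ∑ i ∈ range n, c ↑i * (Nat.descFactorial i k : F) * a ^ (i - k) = 0 := by
  have := my_deriv_cond (toPoly n c) a m k h hk
  rw [toPoly, Polynomial.iterate_derivative_sum] at this
  simp only [Polynomial.iterate_derivative_C_mul,
    Polynomial.iterate_derivative_X_pow_eq_C_mul, eval_finset_sum, eval_mul, eval_C,
    eval_pow, eval_X] at this
  rw [← this]
  exact Finset.sum_congr rfl fun i _ => by ring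


lemma toPoly_coeff (n : ℕ) (c : ZMod n → F) (k : ℕ) :
    (toPoly n c).coeff k = if k < n then c ↑k else 0 := by
  rw [toPoly, finset_sum_coeff]
  simp only [coeff_C_mul, coeff_X_pow, mul_ite, mul_one, mul_zero]
  rw [Finset.sum_ite_eq (Finset.range n) k (fun i => c ↑i)]
  simp [Finset.mem_range]

lemma toPoly_degree_lt (n : ℕ) (hn : 0 < n) (c : ZMod n → F) : (toPoly n c).degree < n := by
  rw [toPoly]
  refine lt_of_le_of_lt (Polynomial.degree_sum_le _ _) ?_
  rw [Finset.sup_lt_iff (by exact_mod_cast WithBot.bot_lt_coe n)]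
  intro i hi
  exact lt_of_le_of_lt (degree_C_mul_X_pow_le i _)
    (by exact_mod_cast Finset.mem_range.mp hi)

lemma toPoly_word (n : ℕ) [NeZero n] (P : F[X]) (hP : P.degree < n) :
    toPoly n (fun j => P.coeff j.val) = P := by
  ext k
  rw [toPoly_coeff]
  split_ifs with h
  · rw [ZMod.val_cast_of_lt h]
  · exact (Polynomial.coeff_eq_zero_of_degree_lt (lt_of_lt_of_le hP (by
      exact_mod_cast Nat.le_of_not_lt h))).symm

lemma card_cyclicCode (n : ℕ) [NeZero n] (g : F[X]) (hg : g.Monic)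
    (hd : g.natDegree < n) :
    Nat.card (cyclicCode n g) = Nat.card F ^ (n - g.natDegree) := by
  have hn : 0 < n := Nat.pos_of_ne_zero (NeZero.ne n)
  set d := g.natDegree with hdd
  have hgne : g ≠ 0 := hg.ne_zero
  have hmul : ∀ q : F[X], q ∈ Polynomial.degreeLT F (n - d) → (g * q).degree < n := by
    intro q hq
    rcases eq_or_ne q 0 with rfl | hq0
    · rw [mul_zero, degree_zero]
      exact_mod_cast WithBot.bot_lt_coe n
    · rw [degree_mul, Polynomial.degree_eq_natDegree hgne,
        Polynomial.degree_eq_natDegree hq0]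
      have h1 : q.natDegree < n - d := by
        have := Polynomial.mem_degreeLT.mp hq
        rw [Polynomial.degree_eq_natDegree hq0] at this
        exact_mod_cast this
      exact_mod_cast (show (d + q.natDegree : ℕ) < n by omega)
  have e1 : (Polynomial.degreeLT F (n - d) : Submodule F F[X]) ≃ cyclicCode n g := by
    refine ⟨fun q => ⟨fun j => (g * q.1).coeff j.val, ?_⟩,
      fun c => ⟨toPoly n c.1 /ₘ g, ?_⟩, ?_, ?_⟩
    · -- membership: g ∣ toPoly of word
      obtain ⟨q, hq⟩ := q
      show g ∣ toPoly n _
      rw [toPoly_word n _ (hmul q hq)]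
      exact Dvd.intro _ rfl
    · -- membership: quotient in degreeLT
      obtain ⟨c, hc⟩ := c
      rw [Polynomial.mem_degreeLT]
      rcases eq_or_ne (toPoly n c /ₘ g) 0 with h0 | h0
      · rw [h0, degree_zero]
        exact_mod_cast WithBot.bot_lt_coe _
      · have hne : toPoly n c ≠ 0 := by
          intro h1
          apply h0
          rw [h1, Polynomial.zero_divByMonic]
        rw [Polynomial.degree_eq_natDegree h0,
          Polynomial.natDegree_divByMonic _ hg]
        have hnd : (toPoly n c).natDegree < n := by
          have := toPoly_degree_lt n hn c
          rw [Polynomial.degree_eq_natDegree hne] at this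
          exact_mod_cast this
        have hge : d ≤ (toPoly n c).natDegree := by
          by_contra hle
          apply h0
          rw [Polynomial.divByMonic_eq_zero_iff hg,
            Polynomial.degree_eq_natDegree hne, Polynomial.degree_eq_natDegree hgne]
          exact_mod_cast (by omega : (toPoly n c).natDegree < d)
        exact_mod_cast (show (toPoly n c).natDegree - d < n - d by omega)
    · -- left inverse
      rintro ⟨q, hq⟩
      ext1
      show toPoly n (fun j => (g * q).coeff j.val) /ₘ g = q
      rw [toPoly_word n _ (hmul q hq), Polynomial.mul_divByMonic_cancel_left _ hg]
    · -- right inverse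
      rintro ⟨c, hc⟩
      have hdvd : g ∣ toPoly n c := hc
      have hkey : g * (toPoly n c /ₘ g) = toPoly n c := by
        have := Polynomial.modByMonic_add_div (toPoly n c) g
        rwa [(Polynomial.modByMonic_eq_zero_iff_dvd hg).mpr hdvd, zero_add] at this
      ext j
      show (g * (toPoly n c /ₘ g)).coeff j.val = c j
      rw [hkey, toPoly_coeff, if_pos (ZMod.val_lt j), ZMod.natCast_zmod_val]
  rw [← Nat.card_congr e1, Nat.card_congr (Polynomial.degreeLTEquiv F (n - d)).toEquiv,
    Nat.card_fun, Nat.card_eq_fintype_card (α := Fin (n - d)), Fintype.card_fin]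

section main
variable {p : ℕ} [hp : Fact p.Prime] {ω : ZMod p}

lemma seven_le (hdvd : 3 ∣ p - 1) : 7 ≤ p := by
  have h2 := hp.out.two_le
  by_contra h
  interval_cases p
  · omega
  · omega
  · exact absurd hp.out (by decide)
  · omega
  · exact absurd hp.out (by decide)

lemma omega_cube (hω : IsPrimitiveRoot ω 3) : ω ^ 3 = 1 := hω.pow_eq_one

lemma omega_sum (hω : IsPrimitiveRoot ω 3) : 1 + ω + ω ^ 2 = 0 := by
  have h3 : ω ^ 3 = 1 := hω.pow_eq_one
  have hne : ω ≠ 1 := hω.ne_one (by norm_num)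
  have : (ω - 1) * (1 + ω + ω ^ 2) = 0 := by linear_combination h3
  rcases mul_eq_zero.mp this with h | h
  · exact absurd (sub_eq_zero.mp h) hne
  · exact h

lemma X3_factor (hω : IsPrimitiveRoot ω 3) :
    (X - 1) * (X - C ω) * (X - C (ω ^ 2)) = (X ^ 3 - 1 : (ZMod p)[X]) := by
  have h1 : (1 : (ZMod p)[X]) + C ω + C ω ^ 2 = 0 := by
    have := congrArg (C : ZMod p → (ZMod p)[X]) (omega_sum hω)
    simpa using this
  have h3 : (C ω : (ZMod p)[X]) ^ 3 = 1 := by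
    rw [← map_pow, omega_cube hω, map_one]
  rw [map_pow]
  linear_combination (-(X:(ZMod p)[X])^2 + X) * h1 + (X - 1) * h3

lemma cast_ne_cast {n : ℕ} [NeZero n] {a b : ℕ} (ha : a < n) (hb : b < n) (hab : a ≠ b) :
    (a : ZMod n) ≠ (b : ZMod n) := by
  intro h
  apply hab
  have := congrArg ZMod.val h
  rwa [ZMod.val_cast_of_lt ha, ZMod.val_cast_of_lt hb] at this

/-- The weight-5 codeword. -/
noncomputable def wfive (p : ℕ) : ZMod (3 * p) → ZMod p := fun j =>
  if j = 0 then 1 else if j = 3 then -4 else if j = 6 then 6 else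
  if j = 9 then -4 else if j = 12 then 1 else 0

lemma wfive_support (hdvd : 3 ∣ p - 1) :
    ∀ i : ℕ, i < 3 * p → i ∉ ({0, 3, 6, 9, 12} : Finset ℕ) → wfive p (↑i) = 0 := by
  have h7 := seven_le (p := p) hdvd
  have : NeZero (3 * p) := ⟨by omega⟩
  intro i hi hmem
  simp only [Finset.mem_insert, Finset.mem_singleton] at hmem
  push_neg at hmem
  obtain ⟨h0, h3, h6, h9, h12⟩ := hmem
  have c0 : (i : ZMod (3 * p)) ≠ 0 := by
    simpa using cast_ne_cast hi (by omega : 0 < 3 * p) h0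
  have c3 : (i : ZMod (3 * p)) ≠ 3 := by
    simpa using cast_ne_cast hi (by omega : 3 < 3 * p) h3
  have c6 : (i : ZMod (3 * p)) ≠ 6 := by
    simpa using cast_ne_cast hi (by omega : 6 < 3 * p) h6
  have c9 : (i : ZMod (3 * p)) ≠ 9 := by
    simpa using cast_ne_cast hi (by omega : 9 < 3 * p) h9
  have c12 : (i : ZMod (3 * p)) ≠ 12 := by
    simpa using cast_ne_cast hi (by omega : 12 < 3 * p) h12
  simp [wfive, c0, c3, c6, c9, c12]

lemma wfive_toPoly (hdvd : 3 ∣ p - 1) :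
    toPoly (3 * p) (wfive p) = ((X : (ZMod p)[X]) ^ 3 - 1) ^ 4 := by
  have h7 := seven_le (p := p) hdvd
  have hNZ : NeZero (3 * p) := ⟨by omega⟩
  have hsub : ({0, 3, 6, 9, 12} : Finset ℕ) ⊆ Finset.range (3 * p) := by
    intro i hi
    fin_cases hi <;> simp <;> omega
  rw [toPoly, ← Finset.sum_subset hsub (fun i hi hmem => by
    rw [wfive_support hdvd i (Finset.mem_range.mp hi) hmem, map_zero, zero_mul])]
  have e0 : wfive p ((0 : ℕ) : ZMod (3 * p)) = 1 := by
    simp [wfive]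
  have e3 : wfive p ((3 : ℕ) : ZMod (3 * p)) = -4 := by
    have c0 : (3 : ZMod (3 * p)) ≠ 0 := by
      simpa using cast_ne_cast (by omega : 3 < 3*p) (by omega : 0 < 3 * p) (by omega)
    simp only [wfive, Nat.cast_ofNat, if_neg c0, if_pos rfl, if_true]
  have e6 : wfive p ((6 : ℕ) : ZMod (3 * p)) = 6 := by
    have c0 : (6 : ZMod (3 * p)) ≠ 0 := by
      simpa using cast_ne_cast (by omega : 6 < 3*p) (by omega : 0 < 3 * p) (by omega)
    have c3 : (6 : ZMod (3 * p)) ≠ 3 := by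
      have := cast_ne_cast (n := 3*p) (by omega : 6 < 3*p) (by omega : 3 < 3 * p) (by omega)
      simpa using this
    simp only [wfive, Nat.cast_ofNat, if_neg c0, if_neg c3, if_pos rfl, if_true]
  have e9 : wfive p ((9 : ℕ) : ZMod (3 * p)) = -4 := by
    have c0 : (9 : ZMod (3 * p)) ≠ 0 := by
      simpa using cast_ne_cast (by omega : 9 < 3*p) (by omega : 0 < 3 * p) (by omega)
    have c3 : (9 : ZMod (3 * p)) ≠ 3 := by
      have := cast_ne_cast (n := 3*p) (by omega : 9 < 3*p) (by omega : 3 < 3 * p) (by omega)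
      simpa using this
    have c6 : (9 : ZMod (3 * p)) ≠ 6 := by
      have := cast_ne_cast (n := 3*p) (by omega : 9 < 3*p) (by omega : 6 < 3 * p) (by omega)
      simpa using this
    simp only [wfive, Nat.cast_ofNat, if_neg c0, if_neg c3, if_neg c6, if_pos rfl, if_true]
  have e12 : wfive p ((12 : ℕ) : ZMod (3 * p)) = 1 := by
    have c0 : (12 : ZMod (3 * p)) ≠ 0 := by
      simpa using cast_ne_cast (by omega : 12 < 3*p) (by omega : 0 < 3 * p) (by omega)
    have c3 : (12 : ZMod (3 * p)) ≠ 3 := by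
      have := cast_ne_cast (n := 3*p) (by omega : 12 < 3*p) (by omega : 3 < 3 * p) (by omega)
      simpa using this
    have c6 : (12 : ZMod (3 * p)) ≠ 6 := by
      have := cast_ne_cast (n := 3*p) (by omega : 12 < 3*p) (by omega : 6 < 3 * p) (by omega)
      simpa using this
    have c9 : (12 : ZMod (3 * p)) ≠ 9 := by
      have := cast_ne_cast (n := 3*p) (by omega : 12 < 3*p) (by omega : 9 < 3 * p) (by omega)
      simpa using this
    simp only [wfive, Nat.cast_ofNat, if_neg c0, if_neg c3, if_neg c6, if_neg c9, if_pos rfl, if_true]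
  rw [show ({0, 3, 6, 9, 12} : Finset ℕ) = {0} ∪ {3} ∪ {6} ∪ {9} ∪ {12} by decide]
  rw [Finset.sum_union (by decide), Finset.sum_union (by decide),
    Finset.sum_union (by decide), Finset.sum_union (by decide)]
  simp only [Finset.sum_singleton, e0, e3, e6, e9, e12, map_one, map_neg, map_ofNat]
  ring

lemma wfive_mem (hdvd : 3 ∣ p - 1) (hω : IsPrimitiveRoot ω 3) :
    wfive p ∈ cyclicCode (3 * p)
      ((X - 1) ^ 4 * (X - C ω) ^ 2 * (X - C (ω ^ 2)) : (ZMod p)[X]) := by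
  show _ ∣ toPoly (3 * p) (wfive p)
  rw [wfive_toPoly hdvd, ← X3_factor hω]
  exact ⟨(X - C ω) ^ 2 * (X - C (ω ^ 2)) ^ 3, by ring⟩

lemma wfive_ne_zero (hdvd : 3 ∣ p - 1) : wfive p ≠ 0 := by
  intro h
  have := congrFun h 0
  simp only [wfive, if_pos rfl, Pi.zero_apply] at this
  exact one_ne_zero this

lemma wfive_wt (hdvd : 3 ∣ p - 1) : hammingWt (3 * p) (wfive p) = 5 := by
  have h7 := seven_le (p := p) hdvd
  have hNZ : NeZero (3 * p) := ⟨by omega⟩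
  have h4 : (4 : ZMod p) ≠ 0 := by
    simpa using cast_ne_cast (n := p) (by omega : 4 < p) (by omega : 0 < p) (by omega)
  have h6 : (6 : ZMod p) ≠ 0 := by
    simpa using cast_ne_cast (n := p) (by omega : 6 < p) (by omega : 0 < p) (by omega)
  have hset : (Finset.range (3 * p)).filter (fun i : ℕ => wfive p (↑i) ≠ 0)
      = {0, 3, 6, 9, 12} := by
    ext i
    simp only [Finset.mem_filter, Finset.mem_range]
    constructor
    · rintro ⟨hi, hne⟩
      by_contra hmem
      exact hne (wfive_support hdvd i hi hmem)
    · intro hmem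
      refine ⟨by fin_cases hmem <;> omega, ?_⟩
      fin_cases hmem
      · simp [wfive]
      · rw [show ((3:ℕ) : ZMod (3*p)) = 3 by push_cast; ring]
        simp only [wfive, if_neg (show (3 : ZMod (3*p)) ≠ 0 by
          simpa using cast_ne_cast (by omega : 3 < 3*p) (by omega : 0 < 3*p) (by omega)),
          if_pos rfl]
        simpa using h4
      · rw [show ((6:ℕ) : ZMod (3*p)) = 6 by push_cast; ring]
        simp only [wfive, if_neg (show (6 : ZMod (3*p)) ≠ 0 by
          simpa using cast_ne_cast (by omega : 6 < 3*p) (by omega : 0 < 3*p) (by omega)),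
          if_neg (show (6 : ZMod (3*p)) ≠ 3 by
          simpa using cast_ne_cast (by omega : 6 < 3*p) (by omega : 3 < 3*p) (by omega)),
          if_pos rfl]
        exact h6
      · rw [show ((9:ℕ) : ZMod (3*p)) = 9 by push_cast; ring]
        simp only [wfive, if_neg (show (9 : ZMod (3*p)) ≠ 0 by
          simpa using cast_ne_cast (by omega : 9 < 3*p) (by omega : 0 < 3*p) (by omega)),
          if_neg (show (9 : ZMod (3*p)) ≠ 3 by
          simpa using cast_ne_cast (by omega : 9 < 3*p) (by omega : 3 < 3*p) (by omega)),
          if_neg (show (9 : ZMod (3*p)) ≠ 6 by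
          simpa using cast_ne_cast (by omega : 9 < 3*p) (by omega : 6 < 3*p) (by omega)),
          if_pos rfl]
        simpa using h4
      · rw [show ((12:ℕ) : ZMod (3*p)) = 12 by push_cast; ring]
        simp only [wfive, if_neg (show (12 : ZMod (3*p)) ≠ 0 by
          simpa using cast_ne_cast (by omega : 12 < 3*p) (by omega : 0 < 3*p) (by omega)),
          if_neg (show (12 : ZMod (3*p)) ≠ 3 by
          simpa using cast_ne_cast (by omega : 12 < 3*p) (by omega : 3 < 3*p) (by omega)),
          if_neg (show (12 : ZMod (3*p)) ≠ 6 by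
          simpa using cast_ne_cast (by omega : 12 < 3*p) (by omega : 6 < 3*p) (by omega)),
          if_neg (show (12 : ZMod (3*p)) ≠ 9 by
          simpa using cast_ne_cast (by omega : 12 < 3*p) (by omega : 9 < 3*p) (by omega)),
          if_pos rfl]
        exact one_ne_zero
  rw [hammingWt, hset]
  decide

lemma df2cast (i : ℕ) : ((Nat.descFactorial i 2 : ℕ) : F) = (i:F)^2 - i := by
  rcases i with _ | n
  · simp
  · have : Nat.descFactorial (n+1) 2 = (n+1) * n := by
      simp [Nat.descFactorial, Nat.mul_comm]
    rw [this]
    push_cast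
    ring

lemma df3cast (i : ℕ) : ((Nat.descFactorial i 3 : ℕ) : F) = (i:F)^3 - 3*(i:F)^2 + 2*i := by
  rcases i with _ | n
  · simp
  · rcases n with _ | m
    · norm_num [Nat.descFactorial]
    · have : Nat.descFactorial (m+2) 3 = (m+2) * ((m+1) * m) := by
        simp [Nat.descFactorial, Nat.mul_comm, Nat.mul_left_comm]
        ring
      rw [this]
      push_cast
      ring

lemma min_wt (hdvd : 3 ∣ p - 1) (hω : IsPrimitiveRoot ω 3) :
    ∀ c ∈ cyclicCode (3 * p)
      ((X - 1) ^ 4 * (X - C ω) ^ 2 * (X - C (ω ^ 2)) : (ZMod p)[X]),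
      c ≠ 0 → 5 ≤ hammingWt (3 * p) c := by
  have h7 := seven_le (p := p) hdvd
  have hNZ : NeZero (3 * p) := ⟨by omega⟩
  have hs : 1 + ω + ω ^ 2 = 0 := omega_sum hω
  have hw : ω ^ 3 = 1 := omega_cube hω
  have h3ne : (3 : ZMod p) ≠ 0 := by
    simpa using cast_ne_cast (n := p) (by omega : 3 < p) (by omega : 0 < p) (by omega)
  intro c hc hne
  by_contra hlt
  push_neg at hlt
  set S : Finset ℕ := (Finset.range (3 * p)).filter (fun i : ℕ => c ↑i ≠ 0) with hS
  have hS4 : S.card ≤ 4 := by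
    have : hammingWt (3 * p) c = S.card := rfl
    omega
  have hfS : ∀ i ∈ S, c (↑i) ≠ 0 := fun i hi => (Finset.mem_filter.mp hi).2
  have hSsub : S ⊆ Finset.range (3 * p) := Finset.filter_subset _ _
  have hSne : S.Nonempty := by
    obtain ⟨j, hj⟩ := Function.ne_iff.mp hne
    refine ⟨j.val, Finset.mem_filter.mpr ⟨Finset.mem_range.mpr (ZMod.val_lt j), ?_⟩⟩
    rwa [ZMod.natCast_zmod_val]
  -- divisibility facts
  have hcd : ((X - 1) ^ 4 * (X - C ω) ^ 2 * (X - C (ω ^ 2)) : (ZMod p)[X]) ∣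
      toPoly (3 * p) c := hc
  have d1 : ((X - C 1) ^ 4 : (ZMod p)[X]) ∣ toPoly (3 * p) c := by
    rw [map_one]
    exact dvd_trans ⟨(X - C ω) ^ 2 * (X - C (ω ^ 2)), by ring⟩ hcd
  have dω : ((X - C ω) ^ 2 : (ZMod p)[X]) ∣ toPoly (3 * p) c := by
    refine dvd_trans ⟨(X - 1) ^ 4 * (X - C (ω ^ 2)), by ring⟩ hcd
  have dω2 : ((X - C (ω ^ 2)) ^ 1 : (ZMod p)[X]) ∣ toPoly (3 * p) c := by
    refine dvd_trans ⟨(X - 1) ^ 4 * (X - C ω) ^ 2, by ring⟩ hcd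
  -- restriction of sums to S
  have key : ∀ t : ℕ → ZMod p, ∑ i ∈ Finset.range (3 * p), c ↑i * t i = ∑ i ∈ S, c ↑i * t i := by
    intro t
    refine (Finset.sum_subset hSsub ?_).symm
    intro i hi hns
    have hz : c ↑i = 0 := by
      by_contra hf0
      exact hns (Finset.mem_filter.mpr ⟨hi, hf0⟩)
    rw [hz, zero_mul]
  -- the seven moment conditions
  have M0 : ∑ i ∈ S, c ↑i = 0 := by
    have h := my_moment (3 * p) c 1 4 0 d1 (by norm_num)
    have h' : ∑ i ∈ Finset.range (3 * p), c ↑i * 1 = 0 := by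
      rw [← h]
      exact Finset.sum_congr rfl fun i _ => by simp
    rw [key] at h'
    simpa using h'
  have M1 : ∑ i ∈ S, c ↑i * (i : ZMod p) = 0 := by
    have h := my_moment (3 * p) c 1 4 1 d1 (by norm_num)
    have h' : ∑ i ∈ Finset.range (3 * p), c ↑i * (i : ZMod p) = 0 := by
      rw [← h]
      exact Finset.sum_congr rfl fun i _ => by simp [Nat.descFactorial]
    rwa [key] at h'
  have M2 : ∑ i ∈ S, c ↑i * (i : ZMod p) ^ 2 = 0 := by
    have h2 := my_moment (3 * p) c 1 4 2 d1 (by norm_num)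
    have h1 := my_moment (3 * p) c 1 4 1 d1 (by norm_num)
    have h' : ∑ i ∈ Finset.range (3 * p), c ↑i * (i : ZMod p) ^ 2 = 0 := by
      have expand : ∀ i ∈ Finset.range (3 * p), c ↑i * (i : ZMod p) ^ 2
          = c ↑i * ↑(Nat.descFactorial i 2) * (1:ZMod p) ^ (i - 2)
            + c ↑i * ↑(Nat.descFactorial i 1) * (1:ZMod p) ^ (i - 1) := by
        intro i _
        rw [one_pow, one_pow, df2cast, Nat.descFactorial_one]
        ring
      rw [Finset.sum_congr rfl expand, Finset.sum_add_distrib, h2, h1, add_zero]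
    rwa [key] at h'
  have M3 : ∑ i ∈ S, c ↑i * (i : ZMod p) ^ 3 = 0 := by
    have h3 := my_moment (3 * p) c 1 4 3 d1 (by norm_num)
    have h2 := my_moment (3 * p) c 1 4 2 d1 (by norm_num)
    have h1 := my_moment (3 * p) c 1 4 1 d1 (by norm_num)
    have h' : ∑ i ∈ Finset.range (3 * p), c ↑i * (i : ZMod p) ^ 3 = 0 := by
      have expand : ∀ i ∈ Finset.range (3 * p), c ↑i * (i : ZMod p) ^ 3
          = c ↑i * ↑(Nat.descFactorial i 3) * (1:ZMod p) ^ (i - 3)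
            + (3 * (c ↑i * ↑(Nat.descFactorial i 2) * (1:ZMod p) ^ (i - 2))
            + c ↑i * ↑(Nat.descFactorial i 1) * (1:ZMod p) ^ (i - 1)) := by
        intro i _
        rw [one_pow, one_pow, one_pow, df3cast, df2cast, Nat.descFactorial_one]
        ring
      rw [Finset.sum_congr rfl expand, Finset.sum_add_distrib, Finset.sum_add_distrib,
        ← Finset.mul_sum, h3, h2, h1, mul_zero]
      norm_num
    rwa [key] at h'
  have W0 : ∑ i ∈ S, c ↑i * ω ^ i = 0 := by
    have h := my_moment (3 * p) c ω 2 0 dω (by norm_num)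
    have h' : ∑ i ∈ Finset.range (3 * p), c ↑i * ω ^ i = 0 := by
      rw [← h]
      exact Finset.sum_congr rfl fun i _ => by simp
    rwa [key] at h'
  have V0 : ∑ i ∈ S, c ↑i * (ω ^ 2) ^ i = 0 := by
    have h := my_moment (3 * p) c (ω ^ 2) 1 0 dω2 (by norm_num)
    have h' : ∑ i ∈ Finset.range (3 * p), c ↑i * (ω ^ 2) ^ i = 0 := by
      rw [← h]
      exact Finset.sum_congr rfl fun i _ => by simp
    rwa [key] at h'
  have W1 : ∑ i ∈ S, c ↑i * (i : ZMod p) * ω ^ i = 0 := by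
    have h := my_moment (3 * p) c ω 2 1 dω (by norm_num)
    have h2 := congrArg (· * ω) h
    simp only [Finset.sum_mul, zero_mul] at h2
    have h' : ∑ i ∈ Finset.range (3 * p), c ↑i * ((i : ZMod p) * ω ^ i) = 0 := by
      rw [← h2]
      refine Finset.sum_congr rfl fun i _ => ?_
      rcases i with _ | j
      · simp
      · rw [Nat.descFactorial_one, show (j + 1) - 1 = j from rfl, pow_succ]
        ring
    rw [key] at h'
    rw [← h']
    exact Finset.sum_congr rfl fun i _ => by ring
  -- fiber decomposition
  classical
  set Sr : ℕ → Finset ℕ := fun r => S.filter (fun i => i % 3 = r) with hSr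
  set A : ℕ → ZMod p := fun r => ∑ i ∈ Sr r, c ↑i with hA
  set T : ℕ → ZMod p := fun r => ∑ i ∈ Sr r, c ↑i * (i : ZMod p) with hT
  have fib : ∀ t : ℕ → ZMod p, ∑ i ∈ S, t i
      = ∑ i ∈ Sr 0, t i + (∑ i ∈ Sr 1, t i + ∑ i ∈ Sr 2, t i) := by
    intro t
    have h := Finset.sum_fiberwise_of_maps_to (s := S)
      (g := fun i : ℕ => i % 3) (t := Finset.range 3)
      (fun i _ => Finset.mem_range.mpr (Nat.mod_lt i (by norm_num))) t
    rw [← h, Finset.sum_range_succ, Finset.sum_range_succ, Finset.sum_range_one]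
    ring
  have hpowmod : ∀ (ζ : ZMod p), ζ ^ 3 = 1 → ∀ r, ∀ i ∈ Sr r, ζ ^ i = ζ ^ r := by
    intro ζ hζ r i hi
    have hr : i % 3 = r := (Finset.mem_filter.mp hi).2
    conv_lhs => rw [← Nat.div_add_mod i 3]
    rw [pow_add, pow_mul, hζ, one_pow, hr, one_mul]
  have hEζ : ∀ (ζ : ZMod p), ζ ^ 3 = 1 → (∑ i ∈ S, c ↑i * ζ ^ i = 0) →
      A 0 + A 1 * ζ + A 2 * ζ ^ 2 = 0 := by
    intro ζ hζ hsum0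
    have h1 := (fib (fun i => c ↑i * ζ ^ i)).symm.trans hsum0
    have e : ∀ r, ∑ i ∈ Sr r, c ↑i * ζ ^ i = (∑ i ∈ Sr r, c ↑i) * ζ ^ r := by
      intro r
      rw [Finset.sum_mul]
      exact Finset.sum_congr rfl fun i hi => by rw [hpowmod ζ hζ r i hi]
    rw [e 0, e 1, e 2] at h1
    simp only [hA]
    rw [← h1, pow_zero, pow_one, mul_one]
    ring
  have hUζ : ∀ (ζ : ZMod p), ζ ^ 3 = 1 → (∑ i ∈ S, c ↑i * (i : ZMod p) * ζ ^ i = 0) →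
      T 0 + T 1 * ζ + T 2 * ζ ^ 2 = 0 := by
    intro ζ hζ hsum0
    have h1 := (fib (fun i => c ↑i * (i : ZMod p) * ζ ^ i)).symm.trans hsum0
    have e : ∀ r, ∑ i ∈ Sr r, c ↑i * (i : ZMod p) * ζ ^ i
        = (∑ i ∈ Sr r, c ↑i * (i : ZMod p)) * ζ ^ r := by
      intro r
      rw [Finset.sum_mul]
      exact Finset.sum_congr rfl fun i hi => by rw [hpowmod ζ hζ r i hi]
    rw [e 0, e 1, e 2] at h1
    simp only [hT]
    rw [← h1, pow_zero, pow_one, mul_one]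
    ring
  have hw2 : (ω ^ 2) ^ 3 = 1 := by
    rw [← pow_mul, show 2 * 3 = 3 * 2 from rfl, pow_mul, hw, one_pow]
  have eA1 : A 0 + A 1 + A 2 = 0 := by
    have := hEζ 1 (one_pow 3) (by
      rw [← M0]; exact Finset.sum_congr rfl fun i _ => by rw [one_pow, mul_one])
    simpa using this
  have eA2 : A 0 + A 1 * ω + A 2 * ω ^ 2 = 0 := hEζ ω hw W0
  have eA3 : A 0 + A 1 * ω ^ 2 + A 2 * (ω ^ 2) ^ 2 = 0 := hEζ (ω ^ 2) hw2 V0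
  have eT1 : T 0 + T 1 + T 2 = 0 := by
    have := hUζ 1 (one_pow 3) (by
      rw [← M1]; exact Finset.sum_congr rfl fun i _ => by rw [one_pow, mul_one])
    simpa using this
  have eT2 : T 0 + T 1 * ω + T 2 * ω ^ 2 = 0 := hUζ ω hw W1
  -- class sums vanish
  have hA0 : A 0 = 0 := by
    have h3A : (3 : ZMod p) * A 0 = 0 := by
      linear_combination eA1 + eA2 + eA3 - (A 1) * hs - (A 2) * hs - (A 2) * ω * hw
    exact (mul_eq_zero.mp h3A).resolve_left h3ne
  have hA1 : A 1 = 0 := by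
    have h3A : (3 : ZMod p) * A 1 = 0 := by
      linear_combination eA1 + ω ^ 2 * eA2 + ω * eA3 - (A 0 + A 2) * hs
        - (2 * A 1 + (ω + ω ^ 2) * A 2) * hw
    exact (mul_eq_zero.mp h3A).resolve_left h3ne
  have hA2 : A 2 = 0 := by
    have h3A : (3 : ZMod p) * A 2 = 0 := by
      linear_combination eA1 + ω * eA2 + ω ^ 2 * eA3 - (A 0 + A 1) * hs
        - (ω * A 1 + (ω ^ 3 + 2) * A 2) * hw
    exact (mul_eq_zero.mp h3A).resolve_left h3ne
  -- no fiber has exactly one element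
  have hfib1 : ∀ r, r < 3 → (Sr r).card ≠ 1 := by
    intro r hr h1
    obtain ⟨i, hi⟩ := Finset.card_eq_one.mp h1
    have hiS : i ∈ S := (Finset.mem_filter.mp (hi ▸ Finset.mem_singleton_self i : i ∈ Sr r)).1
    have hAr : A r = c ↑i := by simp only [hA, hi, Finset.sum_singleton]
    have : A r = 0 := by interval_cases r <;> assumption
    exact hfS i hiS (by rw [← hAr]; exact this)
  -- injectivity of cast within a fiber
  have hinje : ∀ r, ∀ i ∈ Sr r, ∀ j ∈ Sr r, ((i : ℕ) : ZMod p) = ((j : ℕ) : ZMod p) → i = j := by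
    intro r i hi j hj hij
    have hiS := Finset.mem_filter.mp hi
    have hjS := Finset.mem_filter.mp hj
    have hilt : i < 3 * p := Finset.mem_range.mp (hSsub hiS.1)
    have hjlt : j < 3 * p := Finset.mem_range.mp (hSsub hjS.1)
    have hmodp : i ≡ j [MOD p] := (ZMod.natCast_eq_natCast_iff _ _ _).mp hij
    have hmod3 : i ≡ j [MOD 3] := by
      unfold Nat.ModEq
      rw [hiS.2, hjS.2]
    have hcop : Nat.Coprime 3 p :=
      (Nat.coprime_primes (by norm_num) hp.out).mpr (by omega)
    have := (Nat.modEq_and_modEq_iff_modEq_mul hcop).mp ⟨hmod3, hmodp⟩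
    have heq := this
    unfold Nat.ModEq at heq
    rwa [Nat.mod_eq_of_lt hilt, Nat.mod_eq_of_lt hjlt] at heq
  -- cardinality bookkeeping
  have hcards : S.card = (Sr 0).card + (Sr 1).card + (Sr 2).card := by
    have h := Finset.card_eq_sum_card_fiberwise (s := S)
      (f := fun i : ℕ => i % 3) (t := Finset.range 3)
      (fun i _ => Finset.mem_range.mpr (Nat.mod_lt i (by norm_num)))
    rw [h, Finset.sum_range_succ, Finset.sum_range_succ, Finset.sum_range_one]
  have hScard1 : 1 ≤ S.card := Finset.card_pos.mpr hSne
  -- single-fiber endgame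
  have single : ∀ r, r < 3 → (∀ i ∈ S, i % 3 = r) → False := by
    intro r hr hall
    refine my_vand S (fun i => ((i : ℕ) : ZMod p)) (fun i => c ↑i) hSne ?_ hfS ?_
    · intro i hi j hj hij
      exact hinje r i (Finset.mem_filter.mpr ⟨hi, hall i hi⟩)
        j (Finset.mem_filter.mpr ⟨hj, hall j hj⟩) hij
    · intro k hk
      have hk4 : k ≤ 3 := by omega
      interval_cases k
      · simpa using M0
      · simpa using M1
      · exact M2
      · exact M3
  -- two-fiber endgame
  have pair : ∀ r, r < 3 → (Sr r).card = 2 → T r = 0 → False := by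
    intro r hr hcard hTr
    have hArz : A r = 0 := by interval_cases r <;> assumption
    refine my_vand (Sr r) (fun i => ((i : ℕ) : ZMod p)) (fun i => c ↑i)
      (Finset.card_pos.mp (by omega)) (hinje r)
      (fun i hi => hfS i (Finset.mem_filter.mp hi).1) ?_
    intro k hk
    rw [hcard] at hk
    interval_cases k
    · simpa [hA] using hArz
    · simpa [hT] using hTr
  -- ω-facts for solving the T system
  have hω1 : ω ≠ 1 := hω.ne_one (by norm_num)
  have hω21 : ω ^ 2 ≠ 1 := hω.pow_ne_one_of_pos_of_lt (by norm_num) (by norm_num)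
  have hωne0 : ω ≠ 0 := by
    intro h
    rw [h] at hw
    simp at hw
  -- main case analysis
  have hn0 := hfib1 0 (by norm_num)
  have hn1 := hfib1 1 (by norm_num)
  have hn2 := hfib1 2 (by norm_num)
  have hallr : ∀ r, r < 3 → (Sr r).card = 0 → ∀ i ∈ S, i % 3 ≠ r := by
    intro r _ hzero i hi hmod
    have : i ∈ Sr r := Finset.mem_filter.mpr ⟨hi, hmod⟩
    rw [Finset.card_eq_zero.mp hzero] at this
    exact absurd this (Finset.notMem_empty i)
  have hcases : ((Sr 1).card = 0 ∧ (Sr 2).card = 0) ∨ ((Sr 0).card = 0 ∧ (Sr 2).card = 0)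
      ∨ ((Sr 0).card = 0 ∧ (Sr 1).card = 0)
      ∨ ((Sr 0).card = 2 ∧ (Sr 1).card = 2 ∧ (Sr 2).card = 0)
      ∨ ((Sr 0).card = 2 ∧ (Sr 1).card = 0 ∧ (Sr 2).card = 2)
      ∨ ((Sr 0).card = 0 ∧ (Sr 1).card = 2 ∧ (Sr 2).card = 2) := by omega
  rcases hcases with ⟨h1, h2⟩ | ⟨h1, h2⟩ | ⟨h1, h2⟩ | ⟨h1, h2, h3⟩ | ⟨h1, h2, h3⟩ | ⟨h1, h2, h3⟩
  · refine single 0 (by norm_num) fun i hi => ?_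
    have := hallr 1 (by norm_num) h1 i hi
    have := hallr 2 (by norm_num) h2 i hi
    omega
  · refine single 1 (by norm_num) fun i hi => ?_
    have := hallr 0 (by norm_num) h1 i hi
    have := hallr 2 (by norm_num) h2 i hi
    omega
  · refine single 2 (by norm_num) fun i hi => ?_
    have := hallr 0 (by norm_num) h1 i hi
    have := hallr 1 (by norm_num) h2 i hi
    omega
  · -- fibers 0 and 1
    have hT2 : T 2 = 0 := by
      simp only [hT, Finset.card_eq_zero.mp h3, Finset.sum_empty]
    have hT1 : T 1 = 0 := by
      have hkey : (1 - ω) * T 1 = 0 := by linear_combination eT1 - eT2 - (1 - ω ^ 2) * hT2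
      rcases mul_eq_zero.mp hkey with h | h
      · exact absurd (by linear_combination -h : ω = 1) hω1
      · exact h
    have hT0 : T 0 = 0 := by linear_combination eT1 - hT1 - hT2
    exact pair 0 (by norm_num) h1 hT0
  · -- fibers 0 and 2
    have hT1 : T 1 = 0 := by
      simp only [hT, Finset.card_eq_zero.mp h2, Finset.sum_empty]
    have hT2 : T 2 = 0 := by
      have hkey : (1 - ω ^ 2) * T 2 = 0 := by linear_combination eT1 - eT2 - (1 - ω) * hT1
      rcases mul_eq_zero.mp hkey with h | h
      · exact absurd (by linear_combination -h : ω ^ 2 = 1) hω21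
      · exact h
    have hT0 : T 0 = 0 := by linear_combination eT1 - hT1 - hT2
    exact pair 0 (by norm_num) h1 hT0
  · -- fibers 1 and 2
    have hT0 : T 0 = 0 := by
      simp only [hT, Finset.card_eq_zero.mp h1, Finset.sum_empty]
    have hT1 : T 1 = 0 := by
      have hkey : ω * (1 - ω) * T 1 = 0 := by
        linear_combination eT2 - ω ^ 2 * eT1 - (1 - ω ^ 2) * hT0
      rcases mul_eq_zero.mp hkey with h | h
      · rcases mul_eq_zero.mp h with h' | h'
        · exact absurd h' hωne0
        · exact absurd (by linear_combination -h' : ω = 1) hω1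
      · exact h
    exact pair 1 (by norm_num) h2 hT1

theorem stmt_13 (p : ℕ) [hp : Fact p.Prime] (hdvd : 3 ∣ p - 1)
    (ω : ZMod p) (hω : IsPrimitiveRoot ω 3) :
    Nat.card (cyclicCode (3 * p)
        ((X - 1) ^ 4 * (X - Polynomial.C ω) ^ 2 * (X - Polynomial.C (ω ^ 2)) : (ZMod p)[X]))
      = p ^ (3 * p - 7) ∧
    (∃ c ∈ cyclicCode (3 * p)
        ((X - 1) ^ 4 * (X - Polynomial.C ω) ^ 2 * (X - Polynomial.C (ω ^ 2)) : (ZMod p)[X]),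
      c ≠ 0 ∧ hammingWt (3 * p) c = 5) ∧
    (∀ c ∈ cyclicCode (3 * p)
        ((X - 1) ^ 4 * (X - Polynomial.C ω) ^ 2 * (X - Polynomial.C (ω ^ 2)) : (ZMod p)[X]),
      c ≠ 0 → 5 ≤ hammingWt (3 * p) c) := by
  have h7 := seven_le (p := p) hdvd
  have hNZ : NeZero (3 * p) := ⟨by omega⟩
  refine ⟨?_, ⟨wfive p, wfive_mem hdvd hω, wfive_ne_zero hdvd, wfive_wt hdvd⟩,
    min_wt hdvd hω⟩
  have hm1 : ((X : (ZMod p)[X]) - 1).Monic := by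
    have : ((X : (ZMod p)[X]) - 1) = X - C 1 := by rw [map_one]
    rw [this]
    exact monic_X_sub_C 1
  have hmω : ((X : (ZMod p)[X]) - C ω).Monic := monic_X_sub_C ω
  have hmω2 : ((X : (ZMod p)[X]) - C (ω ^ 2)).Monic := monic_X_sub_C (ω ^ 2)
  have hg : (((X : (ZMod p)[X]) - 1) ^ 4 * (X - C ω) ^ 2 * (X - C (ω ^ 2))).Monic :=
    ((hm1.pow 4).mul (hmω.pow 2)).mul hmω2
  have hd1 : ((X : (ZMod p)[X]) - 1).natDegree = 1 := by
    have : ((X : (ZMod p)[X]) - 1) = X - C 1 := by rw [map_one]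
    rw [this, natDegree_X_sub_C]
  have hdeg : (((X : (ZMod p)[X]) - 1) ^ 4 * (X - C ω) ^ 2 * (X - C (ω ^ 2))).natDegree = 7 := by
    rw [((hm1.pow 4).mul (hmω.pow 2)).natDegree_mul hmω2,
      (hm1.pow 4).natDegree_mul (hmω.pow 2), hm1.natDegree_pow, hmω.natDegree_pow,
      hd1, natDegree_X_sub_C, natDegree_X_sub_C]
  have := card_cyclicCode (3 * p) (((X : (ZMod p)[X]) - 1) ^ 4 * (X - C ω) ^ 2 * (X - C (ω ^ 2)))
    hg (by rw [hdeg]; omega)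
  rw [hdeg] at this
  rw [this, Nat.card_zmod]

end main

end aux
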